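/- arXiv:math/9911063 — 2 statements merged into one kernel-verified Lean document; each statement's English description precedes it below -/
import Mathlib

section
/- Let g ≥ 1 and n ≥ 1, and let 1 ≤ i ≤ n. Then in the group PG(g,0,n): y_1 F_i y_1⁻¹ = B_1⁻¹ F_i (the verification of relation (PT3) in the proof of Proposition 3.3). -/
namespace LabruereParisP

/-- `altWord a b m` is the alternating word `prod(a,b,m) = abab⋯` of length `m`. -/
def altWord {α : Type*} (a b : α) : ℕ → FreeGroup α
  | 0 => 1
  | k + 1 => FreeGroup.of a * altWord b a k

/-- The vertex set of the Coxeter graph `PΓ_{g,0,n}`: `Sum.inl i` is `x_i`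
(`0 ≤ i ≤ n`), `Sum.inr (Sum.inl j)` is `y_{j+1}` (`1 ≤ j+1 ≤ 2g-1`), and the
`Unit` vertex is `z`. -/
abbrev S (g n : ℕ) := Fin (n + 1) ⊕ Fin (2 * g - 1) ⊕ Unit

/-- The Coxeter matrix of `PΓ_{g,0,n}`: `m(x_i,y_1) = 3`, `m(y_j,y_{j+1}) = 3`,
`m(z,y_3) = 3`, and label `2` for every other pair of distinct vertices. -/
def cox (g n : ℕ) : S g n → S g n → ℕ
  | Sum.inl _, Sum.inr (Sum.inl j) => if (j : ℕ) = 0 then 3 else 2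
  | Sum.inr (Sum.inl j), Sum.inl _ => if (j : ℕ) = 0 then 3 else 2
  | Sum.inr (Sum.inl j), Sum.inr (Sum.inl k) =>
      if j = k then 1 else if (j : ℕ) + 1 = (k : ℕ) ∨ (k : ℕ) + 1 = (j : ℕ) then 3 else 2
  | Sum.inr (Sum.inr ()), Sum.inr (Sum.inl j) => if (j : ℕ) = 2 then 3 else 2
  | Sum.inr (Sum.inl j), Sum.inr (Sum.inr ()) => if (j : ℕ) = 2 then 3 else 2
  | a, b => if a = b then 1 else 2

/-- The generator `x_i` of the free group (`0 ≤ i ≤ n`; junk value `1` out of range). -/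
def fx (g n i : ℕ) : FreeGroup (S g n) :=
  if h : i < n + 1 then FreeGroup.of (Sum.inl ⟨i, h⟩) else 1

/-- The generator `y_j` (`1 ≤ j ≤ 2g-1`; junk value `1` out of range). -/
def fy (g n j : ℕ) : FreeGroup (S g n) :=
  if h : 1 ≤ j ∧ j ≤ 2 * g - 1 then FreeGroup.of (Sum.inr (Sum.inl ⟨j - 1, by omega⟩)) else 1

/-- The generator `z`. -/
def fz (g n : ℕ) : FreeGroup (S g n) := FreeGroup.of (Sum.inr (Sum.inr ()))

/-- The Artin relators of `PΓ_{g,0,n}`. -/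
def artinRels (g n : ℕ) : Set (FreeGroup (S g n)) :=
  {w | ∃ a b : S g n, a ≠ b ∧
      w = altWord a b (cox g n a b) * (altWord b a (cox g n a b))⁻¹}

/-- `W(i,j) = (x_jy_1x_{i+1}x_jy_1x_j)⁻¹ · x_i · (x_jy_1x_{i+1}x_jy_1x_j)`. -/
def Wrel (g n i j : ℕ) : FreeGroup (S g n) :=
  (fx g n j * fy g n 1 * fx g n (i + 1) * fx g n j * fy g n 1 * fx g n j)⁻¹ *
    fx g n i *
    (fx g n j * fy g n 1 * fx g n (i + 1) * fx g n j * fy g n 1 * fx g n j)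

/-- The relators (PR1)–(PR6) of Proposition 3.3 of Labruère–Paris. -/
def prRels (g n : ℕ) : Set (FreeGroup (S g n)) :=
  {w |
    -- (PR1)
    (2 ≤ g ∧ w = (fy g n 1 * fy g n 2 * fy g n 3 * fz g n) ^ 10 *
        ((fx g n 0 * fy g n 1 * fy g n 2 * fy g n 3 * fz g n) ^ 6)⁻¹) ∨
    -- (PR2)
    (3 ≤ g ∧ w = (fy g n 1 * fy g n 2 * fy g n 3 * fz g n * fy g n 4 * fy g n 5) ^ 12 *
        ((fx g n 0 * fy g n 1 * fy g n 2 * fy g n 3 * fz g n *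
          fy g n 4 * fy g n 5) ^ 9)⁻¹) ∨
    -- (PR3)
    (∃ i j k : ℕ, k < j ∧ j < i ∧ i ≤ n - 1 ∧
        w = fx g n k * Wrel g n i j * (Wrel g n i j * fx g n k)⁻¹) ∨
    -- (PR4)
    (2 ≤ g ∧ ∃ i j : ℕ, j < i ∧ i ≤ n - 1 ∧
        w = fy g n 2 * Wrel g n i j * (Wrel g n i j * fy g n 2)⁻¹) ∨
    -- (PR5)
    (2 ≤ g ∧ w = (fx g n 0 * fx g n 1 * fy g n 1 * fy g n 2 * fy g n 3 * fz g n) ^ 5 *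
        ((fx g n 1 * fy g n 1 * fy g n 2 * fy g n 3 * fz g n) ^ 6)⁻¹) ∨
    -- (PR6)
    (2 ≤ g ∧ ∃ i : ℕ, 1 ≤ i ∧ i ≤ n - 1 ∧
        w = (fx g n i * fx g n (i + 1) * fy g n 1 * fy g n 2 * fy g n 3 * fz g n) ^ 5 *
          ((fx g n (i + 1) * fy g n 1 * fy g n 2 * fy g n 3 * fz g n) ^ 6)⁻¹ *
          ((fx g n 0 * fx g n i * fy g n 1 * fx g n (i + 1)) ^ 3 *
            ((fx g n 0 * fy g n 1 * fx g n (i + 1)) ^ 4)⁻¹)⁻¹)}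

/-- The group `PG(g,0,n)` of Proposition 3.3: the quotient of `A(PΓ_{g,0,n})`
by the relations (PR1)–(PR6). -/
abbrev PG (g n : ℕ) := PresentedGroup (artinRels g n ∪ prRels g n)

/-- The image of `x_i` in `PG(g,0,n)`. -/
def X (g n i : ℕ) : PG g n := PresentedGroup.mk _ (fx g n i)

/-- The image of `y_j` in `PG(g,0,n)`. -/
def Y (g n j : ℕ) : PG g n := PresentedGroup.mk _ (fy g n j)

/-- The image of `z` in `PG(g,0,n)`. -/
def Z (g n : ℕ) : PG g n := PresentedGroup.mk _ (fz g n)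

/-- `Δ(z_1,…,z_m) = (z_1⋯z_m)(z_1⋯z_{m-1})⋯(z_1z_2)z_1`. -/
def deltaList {G : Type*} [Group G] (zs : List G) : G :=
  (((List.range zs.length).reverse).map fun k => (zs.take (k + 1)).prod).prod

/-- `F_i = f(α_i)` (`1 ≤ i ≤ n`): for `i = n`, `F_n = x_{n-1}⁻¹x_n`; for
`1 ≤ i ≤ n-1`,
`F_i = x_{n-1}⁻¹·(x_{i-1}y_1x_nx_{i-1}y_1x_{i-1})⁻¹·x_n⁻¹x_{n-1}·(x_{i-1}y_1x_nx_{i-1}y_1x_{i-1})·x_{n-1}`. -/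
def F (g n i : ℕ) : PG g n :=
  if i = n then (X g n (n - 1))⁻¹ * X g n n
  else
    (X g n (n - 1))⁻¹ *
      (X g n (i - 1) * Y g n 1 * X g n n * X g n (i - 1) * Y g n 1 * X g n (i - 1))⁻¹ *
      (X g n n)⁻¹ * X g n (n - 1) *
      (X g n (i - 1) * Y g n 1 * X g n n * X g n (i - 1) * Y g n 1 * X g n (i - 1)) *
      X g n (n - 1)

/-- `B_i = f(β_i) = Δ(x_{n-1},y_1,…,y_i)⁻¹ · x_{n-1}⁻¹x_n · Δ(x_{n-1},y_1,…,y_i)`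
(`1 ≤ i ≤ 2g-1`). -/
def B (g n i : ℕ) : PG g n :=
  (deltaList (X g n (n - 1) :: (List.range i).map fun k => Y g n (k + 1)))⁻¹ *
    (X g n (n - 1))⁻¹ * X g n n *
    deltaList (X g n (n - 1) :: (List.range i).map fun k => Y g n (k + 1))

end LabruereParisP

section AuxAbstract

variable {G : Type*} [Group G]

private lemma conj1 (a b : G) (Hab : a*b*a = b*a*b) : b⁻¹*a*b = a*b*a⁻¹ := by
  calc b⁻¹*a*b = b⁻¹*(a*b*a)*a⁻¹ := by group
    _ = b⁻¹*(b*a*b)*a⁻¹ := by rw [Hab]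
    _ = a*b*a⁻¹ := by group

private lemma conj2 (b c : G) (Hcb : c*b*c = b*c*b) : b⁻¹*c⁻¹*b = c*b⁻¹*c⁻¹ := by
  calc b⁻¹*c⁻¹*b = c*((c*b*c)⁻¹*b) := by group
    _ = c*((b*c*b)⁻¹*b) := by rw [Hcb]
    _ = c*b⁻¹*c⁻¹ := by group

private lemma stepA (a b c : G) (Hab : a*b*a = b*a*b) (Hcb : c*b*c = b*c*b)
    (Hac : a*c = c*a) :
    (a*b*a)⁻¹*c⁻¹*a*(a*b*a) = b*a⁻¹*c*b⁻¹*c⁻¹*a := by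
  have C : Commute a c := Hac
  have h1 : a⁻¹*c⁻¹ = c⁻¹*a⁻¹ := (C.inv_left.inv_right).eq
  have h2 : c⁻¹*a = a*c⁻¹ := C.inv_right.eq.symm
  calc (a*b*a)⁻¹*c⁻¹*a*(a*b*a)
      = a⁻¹*b⁻¹*((a⁻¹*c⁻¹)*(a*(a*b*a))) := by group
    _ = a⁻¹*b⁻¹*((c⁻¹*a⁻¹)*(a*(a*b*a))) := by rw [h1]
    _ = a⁻¹*b⁻¹*((c⁻¹*a)*(b*a)) := by group
    _ = a⁻¹*b⁻¹*((a*c⁻¹)*(b*a)) := by rw [h2]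
    _ = a⁻¹*(b⁻¹*a*b)*(b⁻¹*c⁻¹*b)*a := by group
    _ = a⁻¹*(a*b*a⁻¹)*(b⁻¹*c⁻¹*b)*a := by rw [conj1 a b Hab]
    _ = a⁻¹*(a*b*a⁻¹)*(c*b⁻¹*c⁻¹)*a := by rw [conj2 b c Hcb]
    _ = b*a⁻¹*c*b⁻¹*c⁻¹*a := by group

private lemma aux_Wb (b c d : G) (Hdb : d*b*d = b*d*b) (Hcd : c*d = d*c) :
    (d*b*c*d*b*d)*b = b*(d*b*c*d*b*d) := by
  calc (d*b*c*d*b*d)*b = (d*b*c*d)*(b*d*b) := by group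
    _ = (d*b*c*d)*(d*b*d) := by rw [← Hdb]
    _ = (d*b)*((c*d)*(d*b*d)) := by group
    _ = (d*b)*((d*c)*(d*b*d)) := by rw [Hcd]
    _ = (d*b*d)*(c*(d*b*d)) := by group
    _ = (b*d*b)*(c*(d*b*d)) := by nth_rewrite 1 [Hdb]; rfl
    _ = b*(d*b*c*d*b*d) := by group

private lemma aux_Wform1 (b c d : G) (Hcb : c*b*c = b*c*b) (Hdb : d*b*d = b*d*b)
    (Hcd : c*d = d*c) :
    d*b*c*d*b*d = b*c*d*b*c*d := by
  calc d*b*c*d*b*d = (d*b)*((c*d)*(b*d)) := by group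
    _ = (d*b)*((d*c)*(b*d)) := by rw [Hcd]
    _ = (d*b*d)*(c*b*d) := by group
    _ = (b*d*b)*(c*b*d) := by rw [Hdb]
    _ = (b*d)*((b*c*b)*d) := by group
    _ = (b*d)*((c*b*c)*d) := by rw [← Hcb]
    _ = b*((d*c)*(b*c*d)) := by group
    _ = b*((c*d)*(b*c*d)) := by rw [← Hcd]
    _ = b*c*d*b*c*d := by group

private lemma aux_Wform2 (b c d : G) (Hcb : c*b*c = b*c*b) (Hdb : d*b*d = b*d*b)
    (Hcd : c*d = d*c) :
    c*d*b*c*d*b = d*b*c*d*b*d := by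
  calc c*d*b*c*d*b = (c*d)*(b*c*d*b) := by group
    _ = (d*c)*(b*c*d*b) := by rw [Hcd]
    _ = d*((c*b*c)*(d*b)) := by group
    _ = d*((b*c*b)*(d*b)) := by rw [Hcb]
    _ = (d*b*c)*(b*d*b) := by group
    _ = (d*b*c)*(d*b*d) := by rw [← Hdb]
    _ = d*b*c*d*b*d := by group

private lemma aux_dW (b c d : G) (Hcb : c*b*c = b*c*b) (Hdb : d*b*d = b*d*b)
    (Hcd : c*d = d*c) :
    d*(d*b*c*d*b*d) = (d*b*c*d*b*d)*c := by
  calc d*(d*b*c*d*b*d) = d*(b*c*d*b*c*d) := by rw [aux_Wform1 b c d Hcb Hdb Hcd]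
    _ = (d*b*c*d*b)*(c*d) := by group
    _ = (d*b*c*d*b)*(d*c) := by rw [Hcd]
    _ = (d*b*c*d*b*d)*c := by group

private lemma aux_hb (a b c d : G) (Hab : a*b*a = b*a*b) (Hac : a*c = c*a)
    (Had : a*d = d*a) :
    b*(a*b*c*d*b*a) = (a*b*c*d*b*a)*b := by
  calc b*(a*b*c*d*b*a) = (b*a*b)*(c*d*(b*a)) := by group
    _ = (a*b*a)*(c*d*(b*a)) := by rw [← Hab]
    _ = (a*b)*((a*c)*(d*(b*a))) := by group
    _ = (a*b)*((c*a)*(d*(b*a))) := by rw [Hac]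
    _ = (a*b*c)*((a*d)*(b*a)) := by group
    _ = (a*b*c)*((d*a)*(b*a)) := by rw [Had]
    _ = (a*b*c*d)*(a*b*a) := by group
    _ = (a*b*c*d)*(b*a*b) := by rw [Hab]
    _ = (a*b*c*d*b*a)*b := by group

private lemma aux_core (a b c d : G) (Hcb : c*b*c = b*c*b) (Hdb : d*b*d = b*d*b)
    (Hac : a*c = c*a) (Had : a*d = d*a) (Hcd : c*d = d*c) :
    c⁻¹*((d*b*c*d*b*d)⁻¹*c⁻¹*a*(d*b*c*d*b*d))*a
      = (d*b*c*d*b*d)⁻¹*(a*b*c*d*b*a) := by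
  have h1 : (d*b*c*d*b*d)⁻¹*d⁻¹ = c⁻¹*(d*b*c*d*b*d)⁻¹ := by
    have h := congrArg (fun x => x⁻¹) (aux_dW b c d Hcb Hdb Hcd)
    simpa [mul_inv_rev] using h
  have h2 : a*((d*b*c*d*b*d)*a) = (c*d)*(a*b*c*d*b*a) := by
    calc a*((d*b*c*d*b*d)*a) = a*((c*d*b*c*d*b)*a) := by
          rw [← aux_Wform2 b c d Hcb Hdb Hcd]
      _ = (a*c)*(d*b*c*d*b*a) := by group
      _ = (c*a)*(d*b*c*d*b*a) := by rw [Hac]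
      _ = c*((a*d)*(b*c*d*b*a)) := by group
      _ = c*((d*a)*(b*c*d*b*a)) := by rw [Had]
      _ = (c*d)*(a*b*c*d*b*a) := by group
  calc c⁻¹*((d*b*c*d*b*d)⁻¹*c⁻¹*a*(d*b*c*d*b*d))*a
      = (c⁻¹*(d*b*c*d*b*d)⁻¹)*(c⁻¹*(a*((d*b*c*d*b*d)*a))) := by group
    _ = ((d*b*c*d*b*d)⁻¹*d⁻¹)*(c⁻¹*(a*((d*b*c*d*b*d)*a))) := by rw [← h1]
    _ = ((d*b*c*d*b*d)⁻¹*d⁻¹)*(c⁻¹*((c*d)*(a*b*c*d*b*a))) := by rw [h2]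
    _ = (d*b*c*d*b*d)⁻¹*(a*b*c*d*b*a) := by group

private lemma abstract_n (a b c : G) (Hab : a*b*a = b*a*b) (Hcb : c*b*c = b*c*b)
    (Hac : a*c = c*a) :
    b * (a⁻¹*c) * b⁻¹ = ((a*b*a)⁻¹*a⁻¹*c*(a*b*a))⁻¹ * (a⁻¹*c) := by
  calc b * (a⁻¹*c) * b⁻¹ = (b*a⁻¹*c*b⁻¹*c⁻¹*a)*(a⁻¹*c) := by group
    _ = ((a*b*a)⁻¹*c⁻¹*a*(a*b*a))*(a⁻¹*c) := by rw [← stepA a b c Hab Hcb Hac]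
    _ = ((a*b*a)⁻¹*a⁻¹*c*(a*b*a))⁻¹ * (a⁻¹*c) := by
          simp only [mul_inv_rev, inv_inv, mul_assoc, mul_inv_cancel_left, inv_mul_cancel_left]

private lemma abstract_lt (a b c d : G) (Hab : a*b*a = b*a*b) (Hcb : c*b*c = b*c*b)
    (Hdb : d*b*d = b*d*b) (Hac : a*c = c*a) (Had : a*d = d*a) (Hcd : c*d = d*c) :
    b * (a⁻¹*(d*b*c*d*b*d)⁻¹*c⁻¹*a*(d*b*c*d*b*d)*a) * b⁻¹
      = ((a*b*a)⁻¹*a⁻¹*c*(a*b*a))⁻¹ * (a⁻¹*(d*b*c*d*b*d)⁻¹*c⁻¹*a*(d*b*c*d*b*d)*a) := by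
  have Cbw : Commute b (d*b*c*d*b*d) := (aux_Wb b c d Hdb Hcd).symm
  have Cbh : Commute b (a*b*c*d*b*a) := aux_hb a b c d Hab Hac Had
  have CbK : Commute b ((d*b*c*d*b*d)⁻¹*(a*b*c*d*b*a)) := (Cbw.inv_right).mul_right Cbh
  have CbK' : Commute b (c⁻¹*((d*b*c*d*b*d)⁻¹*c⁻¹*a*(d*b*c*d*b*d))*a) := by
    rw [aux_core a b c d Hcb Hdb Hac Had Hcd]; exact CbK
  have hKb : (c⁻¹*((d*b*c*d*b*d)⁻¹*c⁻¹*a*(d*b*c*d*b*d))*a)*b⁻¹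
      = b⁻¹*(c⁻¹*((d*b*c*d*b*d)⁻¹*c⁻¹*a*(d*b*c*d*b*d))*a) := (CbK'.inv_left).eq.symm
  calc b * (a⁻¹*(d*b*c*d*b*d)⁻¹*c⁻¹*a*(d*b*c*d*b*d)*a) * b⁻¹
      = (b*a⁻¹*c)*((c⁻¹*((d*b*c*d*b*d)⁻¹*c⁻¹*a*(d*b*c*d*b*d))*a)*b⁻¹) := by group
    _ = (b*a⁻¹*c)*(b⁻¹*(c⁻¹*((d*b*c*d*b*d)⁻¹*c⁻¹*a*(d*b*c*d*b*d))*a)) := by rw [hKb]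
    _ = (b*a⁻¹*c*b⁻¹*c⁻¹*a)*(a⁻¹*(d*b*c*d*b*d)⁻¹*c⁻¹*a*(d*b*c*d*b*d)*a) := by group
    _ = ((a*b*a)⁻¹*c⁻¹*a*(a*b*a))*(a⁻¹*(d*b*c*d*b*d)⁻¹*c⁻¹*a*(d*b*c*d*b*d)*a) := by
          rw [← stepA a b c Hab Hcb Hac]
    _ = ((a*b*a)⁻¹*a⁻¹*c*(a*b*a))⁻¹ * (a⁻¹*(d*b*c*d*b*d)⁻¹*c⁻¹*a*(d*b*c*d*b*d)*a) := by
          simp only [mul_inv_rev, inv_inv, mul_assoc, mul_inv_cancel_left, inv_mul_cancel_left]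

private lemma delta_pair (x y : G) : LabruereParisP.deltaList [x, y] = x*y*x := by
  simp [LabruereParisP.deltaList, List.range_succ]

end AuxAbstract

namespace LabruereParisP

private lemma mk_rel {g n : ℕ} {r : FreeGroup (S g n)}
    (h : r ∈ artinRels g n ∪ prRels g n) :
    PresentedGroup.mk (artinRels g n ∪ prRels g n) r = (1 : PG g n) :=
  (QuotientGroup.eq_one_iff r).mpr (Subgroup.subset_normalClosure h)

private lemma braid_rel (g n : ℕ) (hg : 1 ≤ g) (k : ℕ) (hk : k ≤ n) :
    X g n k * Y g n 1 * X g n k = Y g n 1 * X g n k * Y g n 1 := by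
  have hk' : k < n + 1 := by omega
  have hg0 : 0 < 2 * g - 1 := by omega
  have hy : 1 ≤ 1 ∧ 1 ≤ 2 * g - 1 := ⟨le_refl 1, by omega⟩
  set A : S g n := Sum.inl ⟨k, hk'⟩ with hA
  set Bv : S g n := Sum.inr (Sum.inl ⟨0, hg0⟩) with hBv
  have hfx : fx g n k = FreeGroup.of A := dif_pos hk'
  have hfy : fy g n 1 = FreeGroup.of Bv := dif_pos hy
  have hAB : A ≠ Bv := by simp [hA, hBv]
  have hcox : cox g n A Bv = 3 := rfl
  have hmem : altWord A Bv 3 * (altWord Bv A 3)⁻¹ ∈ artinRels g n ∪ prRels g n :=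
    Or.inl ⟨A, Bv, hAB, by rw [hcox]⟩
  have h1 := mk_rel hmem
  have e1 : altWord A Bv 3 = FreeGroup.of A * (FreeGroup.of Bv * (FreeGroup.of A * 1)) := rfl
  have e2 : altWord Bv A 3 = FreeGroup.of Bv * (FreeGroup.of A * (FreeGroup.of Bv * 1)) := rfl
  rw [e1, e2, map_mul, map_inv, mul_inv_eq_one] at h1
  simp only [map_mul, map_one, mul_one] at h1
  simp only [X, Y, hfx, hfy, mul_assoc]
  exact h1

private lemma comm_rel (g n : ℕ) (j k : ℕ) (hj : j ≤ n) (hk : k ≤ n) (hjk : j ≠ k) :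
    X g n j * X g n k = X g n k * X g n j := by
  have hj' : j < n + 1 := by omega
  have hk' : k < n + 1 := by omega
  set A : S g n := Sum.inl ⟨j, hj'⟩ with hA
  set Bv : S g n := Sum.inl ⟨k, hk'⟩ with hBv
  have hfj : fx g n j = FreeGroup.of A := dif_pos hj'
  have hfk : fx g n k = FreeGroup.of Bv := dif_pos hk'
  have hAB : A ≠ Bv := by
    simp only [hA, hBv, ne_eq, Sum.inl.injEq, Fin.mk.injEq]
    exact hjk
  have e : cox g n A Bv = if A = Bv then 1 else 2 := rfl
  have hcox : cox g n A Bv = 2 := by rw [e, if_neg hAB]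
  have hmem : altWord A Bv 2 * (altWord Bv A 2)⁻¹ ∈ artinRels g n ∪ prRels g n :=
    Or.inl ⟨A, Bv, hAB, by rw [hcox]⟩
  have h1 := mk_rel hmem
  have e1 : altWord A Bv 2 = FreeGroup.of A * (FreeGroup.of Bv * 1) := rfl
  have e2 : altWord Bv A 2 = FreeGroup.of Bv * (FreeGroup.of A * 1) := rfl
  rw [e1, e2, map_mul, map_inv, mul_inv_eq_one] at h1
  simp only [map_mul, map_one, mul_one] at h1
  simp only [X, hfj, hfk]
  exact h1

end LabruereParisP


open LabruereParisP in
/-- The verification of relation (PT3) in the proof of Proposition 3.3 of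
Labruère–Paris: in `PG(g,0,n)`, `y_1F_iy_1⁻¹ = B_1⁻¹F_i` for `1 ≤ i ≤ n`. -/
theorem relation_PT3 (g n : ℕ) (hg : 1 ≤ g) (hn : 1 ≤ n)
    (i : ℕ) (hi1 : 1 ≤ i) (hi2 : i ≤ n) :
    Y g n 1 * F g n i * (Y g n 1)⁻¹ = (B g n 1)⁻¹ * F g n i := by
  have hlt_or : i = n ∨ i < n := by omega
  have Hab : X g n (n-1) * Y g n 1 * X g n (n-1) = Y g n 1 * X g n (n-1) * Y g n 1 :=
    braid_rel g n hg (n-1) (by omega)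
  have Hcb : X g n n * Y g n 1 * X g n n = Y g n 1 * X g n n * Y g n 1 :=
    braid_rel g n hg n le_rfl
  have Hac : X g n (n-1) * X g n n = X g n n * X g n (n-1) :=
    comm_rel g n (n-1) n (by omega) le_rfl (by omega)
  have hB : B g n 1 = (X g n (n-1) * Y g n 1 * X g n (n-1))⁻¹ * (X g n (n-1))⁻¹ *
      X g n n * (X g n (n-1) * Y g n 1 * X g n (n-1)) := by
    simp only [B, show List.range 1 = [0] from rfl, List.map_cons, List.map_nil, zero_add, delta_pair]
  rcases hlt_or with hin | hlt
  · have hF : F g n i = (X g n (n-1))⁻¹ * X g n n := by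
      unfold F; rw [if_pos hin]
    rw [hF, hB]
    exact abstract_n (X g n (n-1)) (Y g n 1) (X g n n) Hab Hcb Hac
  · have hin : ¬ (i = n) := by omega
    have Hdb : X g n (i-1) * Y g n 1 * X g n (i-1) = Y g n 1 * X g n (i-1) * Y g n 1 :=
      braid_rel g n hg (i-1) (by omega)
    have Had : X g n (n-1) * X g n (i-1) = X g n (i-1) * X g n (n-1) :=
      comm_rel g n (n-1) (i-1) (by omega) (by omega) (by omega)
    have Hcd : X g n n * X g n (i-1) = X g n (i-1) * X g n n :=
      comm_rel g n n (i-1) le_rfl (by omega) (by omega)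
    have hF : F g n i = (X g n (n-1))⁻¹ *
        (X g n (i-1) * Y g n 1 * X g n n * X g n (i-1) * Y g n 1 * X g n (i-1))⁻¹ *
        (X g n n)⁻¹ * X g n (n-1) *
        (X g n (i-1) * Y g n 1 * X g n n * X g n (i-1) * Y g n 1 * X g n (i-1)) *
        X g n (n-1) := by
      unfold F; rw [if_neg hin]
    rw [hF, hB]
    exact abstract_lt (X g n (n-1)) (Y g n 1) (X g n n) (X g n (i-1)) Hab Hcb Hdb Hac Had Hcd
end

section
/- Let g ≥ 2 and n ≥ 1, and let 0 ≤ j ≤ n−1 and 2 ≤ i ≤ 2g−1. Then in the group PG(g,0,n) the element x_j commutes with B_i: x_j B_i x_j⁻¹ = B_i (the verification of relation (PT7) in the proof of Proposition 3.3). -/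
namespace LPgen
variable {G : Type*} [Group G]


variable {G : Type*} [Group G]

/-- braid conj: q*p*q⁻¹ = p⁻¹*q*p -/
lemma brA {p q : G} (h : p*q*p = q*p*q) : q*p*q⁻¹ = p⁻¹*q*p := by
  apply mul_left_cancel (a := p)
  calc p*(q*p*q⁻¹) = (p*q*p)*q⁻¹ := by group
  _ = (q*p*q)*q⁻¹ := by rw [h]
  _ = p*(p⁻¹*q*p) := by group

/-- braid conj: q⁻¹*p*q = p*q*p⁻¹ -/
lemma brB {p q : G} (h : p*q*p = q*p*q) : q⁻¹*p*q = p*q*p⁻¹ := by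
  apply mul_left_cancel (a := q)
  apply mul_right_cancel (b := p)
  calc q*(q⁻¹*p*q)*p = p*q*p := by group
  _ = q*p*q := h
  _ = q*(p*q*p⁻¹)*p := by group

/-- braid conj: p*q*p⁻¹ = q⁻¹*p*q -/
lemma brC {p q : G} (h : p*q*p = q*p*q) : p*q*p⁻¹ = q⁻¹*p*q :=
  brA (p := q) (q := p) h.symm

/-- braid conj: p⁻¹*q*p = q*p*q⁻¹ -/
lemma brD {p q : G} (h : p*q*p = q*p*q) : p⁻¹*q*p = q*p*q⁻¹ :=
  brB (p := q) (q := p) h.symm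

/-- braid conj inverse: q⁻¹*p⁻¹*q = p*q⁻¹*p⁻¹ -/
lemma brE {p q : G} (h : p*q*p = q*p*q) : q⁻¹*p⁻¹*q = p*q⁻¹*p⁻¹ := by
  calc q⁻¹*p⁻¹*q = (q⁻¹*p*q)⁻¹ := by group
  _ = (p*q*p⁻¹)⁻¹ := by rw [brB h]
  _ = p*q⁻¹*p⁻¹ := by group

/-- inverse triple : p⁻¹*q⁻¹*p⁻¹ = q⁻¹*p⁻¹*q⁻¹ -/
lemma brF {p q : G} (h : p*q*p = q*p*q) : p⁻¹*q⁻¹*p⁻¹ = q⁻¹*p⁻¹*q⁻¹ := by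
  calc p⁻¹*q⁻¹*p⁻¹ = (p*q*p)⁻¹ := by group
  _ = (q*p*q)⁻¹ := by rw [h]
  _ = q⁻¹*p⁻¹*q⁻¹ := by group

lemma cjA {p q : G} (h : Commute p q) : p⁻¹*q*p = q := by
  rw [h.inv_left.eq]; group

lemma cjB {p q : G} (h : Commute p q) : p*q*p⁻¹ = q := by
  rw [h.eq]; group

lemma gen_b2 {t a y : G} (Hta : t*a = a*t) (Hty : t*y*t = y*t*y)
    (Hay : a*y*a = y*a*y) : a*y*t*y⁻¹*a⁻¹ = t⁻¹*y⁻¹*a*y*t := by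
  have Cta : Commute t a := Hta
  calc a*y*t*y⁻¹*a⁻¹ = a*(y*t*y⁻¹)*a⁻¹ := by group
  _ = a*(t⁻¹*y*t)*a⁻¹ := by rw [brA Hty]
  _ = (a*t⁻¹)*y*(t*a⁻¹) := by group
  _ = (t⁻¹*a)*y*(a⁻¹*t) := by rw [Cta.inv_left.eq.symm, Cta.inv_right.eq]
  _ = t⁻¹*(a*y*a⁻¹)*t := by group
  _ = t⁻¹*(y⁻¹*a*y)*t := by rw [brC Hay]
  _ = t⁻¹*y⁻¹*a*y*t := by group

lemma gen_C2 {t a b y : G} (Htb : t*b = b*t) (Hab : a*b = b*a)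
    (Hty : t*y*t = y*t*y) (Hby : b*y*b = y*b*y) :
    t⁻¹*(y⁻¹*b⁻¹*t⁻¹*y⁻¹*a*y*t*b*y)*t = y⁻¹*t⁻¹*b⁻¹*y⁻¹*a*y*b*t*y := by
  have Ctb : Commute t b := Htb
  calc t⁻¹*(y⁻¹*b⁻¹*t⁻¹*y⁻¹*a*y*t*b*y)*t
      = t⁻¹*y⁻¹*(b⁻¹*t⁻¹)*y⁻¹*a*y*(t*b)*(y*t) := by group
  _ = t⁻¹*y⁻¹*(t⁻¹*b⁻¹)*y⁻¹*a*y*(b*t)*(y*t) := by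
      rw [Ctb.inv_inv.eq.symm, Htb]
  _ = (t⁻¹*y⁻¹*t⁻¹)*(b⁻¹*y⁻¹*a*y*b)*(t*y*t) := by group
  _ = (y⁻¹*t⁻¹*y⁻¹)*(b⁻¹*y⁻¹*a*y*b)*(t*y*t) := by rw [brF Hty]
  _ = (y⁻¹*t⁻¹*y⁻¹)*(b⁻¹*y⁻¹*a*y*b)*(y*t*y) := by rw [Hty]
  _ = y⁻¹*t⁻¹*(y⁻¹*b⁻¹*y⁻¹)*a*(y*b*y)*t*y := by group
  _ = y⁻¹*t⁻¹*(b⁻¹*y⁻¹*b⁻¹)*a*(y*b*y)*t*y := by rw [brF Hby]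
  _ = y⁻¹*t⁻¹*(b⁻¹*y⁻¹*b⁻¹)*a*(b*y*b)*t*y := by rw [Hby]
  _ = y⁻¹*t⁻¹*b⁻¹*y⁻¹*(b⁻¹*a*b)*(y*b*t*y) := by group
  _ = y⁻¹*t⁻¹*b⁻¹*y⁻¹*a*(y*b*t*y) := by
      rw [cjA (show Commute b a from Hab.symm)]
  _ = y⁻¹*t⁻¹*b⁻¹*y⁻¹*a*y*b*t*y := by group

lemma gen_D1 {a b y w : G} (Hab : a*b = b*a) (Haw : a*w = w*a) (Hbw : b*w = w*b)
    (Hay : a*y*a = y*a*y) (Hby : b*y*b = y*b*y) (Hyw : y*w*y = w*y*w) :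
    (w⁻¹*(y⁻¹*(a⁻¹*b)*y)*w)*(a*y*a)*(y⁻¹*(a⁻¹*b)*y)
      = (a*y*a)*(w⁻¹*(y⁻¹*(a⁻¹*b)*y)*w) := by
  have Caw : Commute a w := Haw
  have R : (a*y*a)*(w⁻¹*(y⁻¹*(a⁻¹*b)*y)*w) = a*y*w⁻¹*y⁻¹*a⁻¹*b*y*w*b := by
    calc (a*y*a)*(w⁻¹*(y⁻¹*(a⁻¹*b)*y)*w)
        = a*y*(a*w⁻¹)*y⁻¹*a⁻¹*(b*y*w) := by group
    _ = a*y*(w⁻¹*a)*y⁻¹*a⁻¹*(b*y*w) := by rw [Caw.inv_right.eq]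
    _ = a*y*w⁻¹*(a*y⁻¹*a⁻¹)*(b*y*w) := by group
    _ = a*y*w⁻¹*(y⁻¹*a⁻¹*y)*(b*y*w) := by rw [← brE Hay]
    _ = a*y*w⁻¹*y⁻¹*a⁻¹*(y*b*y)*w := by group
    _ = a*y*w⁻¹*y⁻¹*a⁻¹*(b*y*b)*w := by rw [← Hby]
    _ = a*y*w⁻¹*y⁻¹*a⁻¹*b*y*(b*w) := by group
    _ = a*y*w⁻¹*y⁻¹*a⁻¹*b*y*(w*b) := by rw [Hbw]
    _ = a*y*w⁻¹*y⁻¹*a⁻¹*b*y*w*b := by group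
  calc (w⁻¹*(y⁻¹*(a⁻¹*b)*y)*w)*(a*y*a)*(y⁻¹*(a⁻¹*b)*y)
      = w⁻¹*y⁻¹*a⁻¹*b*y*w*a*(y*a*y⁻¹)*(a⁻¹*b*y) := by group
  _ = w⁻¹*y⁻¹*a⁻¹*b*y*w*a*(a⁻¹*y*a)*(a⁻¹*b*y) := by rw [brA Hay]
  _ = w⁻¹*y⁻¹*a⁻¹*b*y*w*(y*b*y) := by group
  _ = w⁻¹*y⁻¹*a⁻¹*b*y*w*(b*y*b) := by rw [← Hby]
  _ = w⁻¹*y⁻¹*a⁻¹*b*y*(w*b)*(y*b) := by group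
  _ = w⁻¹*y⁻¹*a⁻¹*b*y*(b*w)*(y*b) := by rw [← Hbw]
  _ = w⁻¹*y⁻¹*a⁻¹*(b*y*b)*(w*y*b) := by group
  _ = w⁻¹*y⁻¹*a⁻¹*(y*b*y)*(w*y*b) := by rw [Hby]
  _ = w⁻¹*(y⁻¹*a⁻¹*y)*b*(y*w*y)*b := by group
  _ = w⁻¹*(a*y⁻¹*a⁻¹)*b*(y*w*y)*b := by rw [brE Hay]
  _ = w⁻¹*(a*y⁻¹*a⁻¹)*b*(w*y*w)*b := by rw [Hyw]
  _ = (w⁻¹*a)*y⁻¹*a⁻¹*(b*w)*(y*w*b) := by group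
  _ = (a*w⁻¹)*y⁻¹*a⁻¹*(w*b)*(y*w*b) := by rw [Caw.inv_right.eq.symm, Hbw]
  _ = a*w⁻¹*y⁻¹*(a⁻¹*w)*(b*y*w*b) := by group
  _ = a*w⁻¹*y⁻¹*(w*a⁻¹)*(b*y*w*b) := by rw [Caw.inv_left.eq]
  _ = a*(w⁻¹*y⁻¹*w)*a⁻¹*(b*y*w*b) := by group
  _ = a*(y*w⁻¹*y⁻¹)*a⁻¹*(b*y*w*b) := by rw [brE Hyw]
  _ = a*y*w⁻¹*y⁻¹*a⁻¹*b*y*w*b := by group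
  _ = (a*y*a)*(w⁻¹*(y⁻¹*(a⁻¹*b)*y)*w) := R.symm

lemma gen_E {t a b y w D : G}
    (Hta : t*a = a*t) (Htb : t*b = b*t) (Hab : a*b = b*a)
    (Htw : t*w = w*t) (Haw : a*w = w*a) (Hbw : b*w = w*b)
    (Hty : t*y*t = y*t*y) (Hay : a*y*a = y*a*y) (Hby : b*y*b = y*b*y)
    (Hyw : y*w*y = w*y*w)
    (hD : D = a*y*w*(a*y)*a)
    (hW : w * ((t*y*b*t*y*t)⁻¹*a*(t*y*b*t*y*t))
        = ((t*y*b*t*y*t)⁻¹*a*(t*y*b*t*y*t)) * w) :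
    (a⁻¹*b) * (D*t*D⁻¹) = (D*t*D⁻¹) * (a⁻¹*b) := by
  have Cta : Commute t a := Hta
  have Ctw : Commute t w := Htw
  obtain ⟨m, hm⟩ : ∃ m : G, m = y⁻¹*(a⁻¹*b)*y := ⟨_, rfl⟩
  -- (†): V⁻¹ a V = t⁻²(m⁻¹ t m)t²
  have hb2 : a*y*t*y⁻¹*a⁻¹ = t⁻¹*y⁻¹*a*y*t := gen_b2 Hta Hty Hay
  have hmtm : m⁻¹*t*m = y⁻¹*b⁻¹*(t⁻¹*y⁻¹*a*y*t)*b*y := by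
    calc m⁻¹*t*m = y⁻¹*b⁻¹*(a*y*t*y⁻¹*a⁻¹)*b*y := by rw [hm]; group
    _ = y⁻¹*b⁻¹*(t⁻¹*y⁻¹*a*y*t)*b*y := by rw [hb2]
  have hC2 := gen_C2 (t := t) (a := a) (b := b) (y := y) Htb Hab Hty Hby
  have hdag : (t*y*b*t*y*t)⁻¹*a*(t*y*b*t*y*t) = t⁻¹*t⁻¹*(m⁻¹*t*m)*(t*t) := by
    calc (t*y*b*t*y*t)⁻¹*a*(t*y*b*t*y*t)
        = t⁻¹*y⁻¹*t⁻¹*b⁻¹*y⁻¹*(t⁻¹*a*t)*(y*b*t*y*t) := by group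
    _ = t⁻¹*y⁻¹*t⁻¹*b⁻¹*y⁻¹*(a)*(y*b*t*y*t) := by rw [cjA Cta]
    _ = t⁻¹*(y⁻¹*t⁻¹*b⁻¹*y⁻¹*a*y*b*t*y)*t := by group
    _ = t⁻¹*(t⁻¹*(y⁻¹*b⁻¹*t⁻¹*y⁻¹*a*y*t*b*y)*t)*t := by rw [hC2]
    _ = t⁻¹*t⁻¹*(y⁻¹*b⁻¹*(t⁻¹*y⁻¹*a*y*t)*b*y)*(t*t) := by group
    _ = t⁻¹*t⁻¹*(m⁻¹*t*m)*(t*t) := by rw [← hmtm]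
  -- w commutes with m⁻¹tm and with h1 := (m⁻¹tm)t⁻¹
  have hX : m⁻¹*t*m = (t*t)*((t*y*b*t*y*t)⁻¹*a*(t*y*b*t*y*t))*(t*t)⁻¹ := by
    rw [hdag]; group
  have Cwt2 : Commute w (t*t) := (Ctw.symm.mul_right Ctw.symm)
  have CwX : Commute w (m⁻¹*t*m) := by
    rw [hX]; exact (Cwt2.mul_right hW).mul_right Cwt2.inv_right
  have Cwh1 : Commute w ((m⁻¹*t*m)*t⁻¹) := CwX.mul_right Ctw.symm.inv_right
  -- D1''
  have hD1 : (w⁻¹*m*w)*(a*y*a)*m = (a*y*a)*(w⁻¹*m*w) := by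
    rw [hm]; exact gen_D1 Hab Haw Hbw Hay Hby Hyw
  -- B2' = K m⁻¹
  have Cab' : Commute a (a⁻¹*b) := (Commute.refl a).inv_right.mul_right Hab
  have hB2 : D⁻¹*(a⁻¹*b)*D = (w⁻¹*m*w)*m⁻¹ := by
    calc D⁻¹*(a⁻¹*b)*D
        = (a*y*a)⁻¹*(w⁻¹*(y⁻¹*(a⁻¹*(a⁻¹*b)*a)*y)*w)*(a*y*a) := by rw [hD]; group
    _ = (a*y*a)⁻¹*(w⁻¹*(y⁻¹*(a⁻¹*b)*y)*w)*(a*y*a) := by rw [cjA Cab']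
    _ = (a*y*a)⁻¹*(w⁻¹*m*w)*(a*y*a) := by rw [← hm]
    _ = (a*y*a)⁻¹*((w⁻¹*m*w)*(a*y*a)*m)*m⁻¹ := by group
    _ = (a*y*a)⁻¹*((a*y*a)*(w⁻¹*m*w))*m⁻¹ := by rw [hD1]
    _ = (w⁻¹*m*w)*m⁻¹ := by group
  -- t fixes K m⁻¹
  have hfix : t*((w⁻¹*m*w)*m⁻¹)*t⁻¹ = (w⁻¹*m*w)*m⁻¹ := by
    calc t*((w⁻¹*m*w)*m⁻¹)*t⁻¹
        = (t*w⁻¹*t⁻¹)*(t*m*t⁻¹)*(t*w*t⁻¹)*(t*m⁻¹*t⁻¹) := by group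
    _ = w⁻¹*(t*m*t⁻¹)*w*(t*m⁻¹*t⁻¹) := by rw [cjB Ctw.inv_right, cjB Ctw]
    _ = w⁻¹*m*(((m⁻¹*t*m)*t⁻¹)*w)*(((m⁻¹*t*m)*t⁻¹)⁻¹*m⁻¹) := by group
    _ = w⁻¹*m*(w*((m⁻¹*t*m)*t⁻¹))*(((m⁻¹*t*m)*t⁻¹)⁻¹*m⁻¹) := by
        rw [Cwh1.eq.symm]
    _ = (w⁻¹*m*w)*m⁻¹ := by group
  have hconj : t*(D⁻¹*(a⁻¹*b)*D)*t⁻¹ = D⁻¹*(a⁻¹*b)*D := by rw [hB2]; exact hfix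
  have hcomm : t*(D⁻¹*(a⁻¹*b)*D) = (D⁻¹*(a⁻¹*b)*D)*t := by
    calc t*(D⁻¹*(a⁻¹*b)*D) = (t*(D⁻¹*(a⁻¹*b)*D)*t⁻¹)*t := by group
    _ = (D⁻¹*(a⁻¹*b)*D)*t := by rw [hconj]
  calc (a⁻¹*b)*(D*t*D⁻¹) = D*((D⁻¹*(a⁻¹*b)*D)*t)*D⁻¹ := by group
  _ = D*(t*(D⁻¹*(a⁻¹*b)*D))*D⁻¹ := by rw [hcomm]
  _ = (D*t*D⁻¹)*(a⁻¹*b) := by group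


lemma semiconj_to_conj {a x y : G} (h : SemiconjBy a x y) : a*x*a⁻¹ = y := by
  rw [h.eq]; group

lemma conj_swap {Dl x u : G} (h : u*(Dl*x*Dl⁻¹) = (Dl*x*Dl⁻¹)*u) :
    x*(Dl⁻¹*u*Dl) = (Dl⁻¹*u*Dl)*x := by
  calc x*(Dl⁻¹*u*Dl) = Dl⁻¹*((Dl*x*Dl⁻¹)*u)*Dl := by group
  _ = Dl⁻¹*(u*(Dl*x*Dl⁻¹))*Dl := by rw [h]
  _ = (Dl⁻¹*u*Dl)*x := by group

end LPgen

namespace LabruereParisP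

open FreeGroup LPgen

section Rels

variable {g n : ℕ}

private lemma mk_rel_one {r : FreeGroup (S g n)} (h : r ∈ artinRels g n ∪ prRels g n) :
    PresentedGroup.mk (artinRels g n ∪ prRels g n) r = 1 :=
  (QuotientGroup.eq_one_iff r).mpr (Subgroup.subset_normalClosure h)

private lemma artin_comm {u v : S g n} (huv : u ≠ v) (hc : cox g n u v = 2) :
    PresentedGroup.mk (artinRels g n ∪ prRels g n) (FreeGroup.of u) *
      PresentedGroup.mk (artinRels g n ∪ prRels g n) (FreeGroup.of v)
    = PresentedGroup.mk (artinRels g n ∪ prRels g n) (FreeGroup.of v) *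
      PresentedGroup.mk (artinRels g n ∪ prRels g n) (FreeGroup.of u) := by
  have h1 := mk_rel_one (g := g) (n := n)
    (Set.mem_union_left _ (show _ ∈ artinRels g n from ⟨u, v, huv, rfl⟩))
  rw [hc] at h1
  have e2 : altWord u v 2 = FreeGroup.of u * (FreeGroup.of v * 1) := rfl
  have e2' : altWord v u 2 = FreeGroup.of v * (FreeGroup.of u * 1) := rfl
  rw [e2, e2'] at h1
  simp only [map_mul, map_one, map_inv, mul_one] at h1
  exact mul_inv_eq_one.mp h1

private lemma artin_braid {u v : S g n} (huv : u ≠ v) (hc : cox g n u v = 3) :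
    PresentedGroup.mk (artinRels g n ∪ prRels g n) (FreeGroup.of u) *
      PresentedGroup.mk (artinRels g n ∪ prRels g n) (FreeGroup.of v) *
      PresentedGroup.mk (artinRels g n ∪ prRels g n) (FreeGroup.of u)
    = PresentedGroup.mk (artinRels g n ∪ prRels g n) (FreeGroup.of v) *
      PresentedGroup.mk (artinRels g n ∪ prRels g n) (FreeGroup.of u) *
      PresentedGroup.mk (artinRels g n ∪ prRels g n) (FreeGroup.of v) := by
  have h1 := mk_rel_one (g := g) (n := n)
    (Set.mem_union_left _ (show _ ∈ artinRels g n from ⟨u, v, huv, rfl⟩))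
  rw [hc] at h1
  have h2 : (PresentedGroup.mk (artinRels g n ∪ prRels g n) (altWord u v 3)) *
      (PresentedGroup.mk (artinRels g n ∪ prRels g n) (altWord v u 3))⁻¹ = 1 := h1
  exact mul_inv_eq_one.mp h2

private lemma X_in (i : ℕ) (h : i ≤ n) :
    X g n i = PresentedGroup.mk (artinRels g n ∪ prRels g n)
      (FreeGroup.of (Sum.inl (⟨i, by omega⟩ : Fin (n+1)))) := by
  unfold X fx
  rw [dif_pos (show i < n + 1 by omega)]

private lemma X_out (i : ℕ) (h : ¬ i ≤ n) : X g n i = 1 := by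
  unfold X fx
  rw [dif_neg (show ¬ i < n + 1 by omega)]
  exact map_one _

private lemma Y_in (k : ℕ) (h1 : 1 ≤ k) (h2 : k ≤ 2*g-1) :
    Y g n k = PresentedGroup.mk (artinRels g n ∪ prRels g n)
      (FreeGroup.of (Sum.inr (Sum.inl (⟨k-1, by omega⟩ : Fin (2*g-1))))) := by
  unfold Y fy
  rw [dif_pos ⟨h1, h2⟩]

private lemma Y_out (k : ℕ) (h : ¬ (1 ≤ k ∧ k ≤ 2*g-1)) : Y g n k = 1 := by
  unfold Y fy
  rw [dif_neg h]
  exact map_one _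

private lemma cox_xx (u v : Fin (n+1)) :
    cox g n (Sum.inl u) (Sum.inl v) = if (Sum.inl u : S g n) = Sum.inl v then 1 else 2 := rfl

private lemma cox_xy' (u : Fin (n+1)) (b : ℕ) (hb : b < 2*g-1) :
    cox g n (Sum.inl u) (Sum.inr (Sum.inl ⟨b, hb⟩)) = if b = 0 then 3 else 2 := rfl

private lemma cox_yy' (a b : ℕ) (ha : a < 2*g-1) (hb : b < 2*g-1) :
    cox g n (Sum.inr (Sum.inl ⟨a, ha⟩)) (Sum.inr (Sum.inl ⟨b, hb⟩)) =
      if (⟨a, ha⟩ : Fin (2*g-1)) = ⟨b, hb⟩ then 1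
      else if a + 1 = b ∨ b + 1 = a then 3 else 2 := rfl

lemma comm_XX (i k : ℕ) : X g n i * X g n k = X g n k * X g n i := by
  by_cases hi : i ≤ n
  · by_cases hk : k ≤ n
    · by_cases hik : i = k
      · rw [hik]
      · rw [X_in i hi, X_in k hk]
        refine artin_comm ?_ ?_
        · simp only [ne_eq, Sum.inl.injEq, Fin.mk.injEq]; exact hik
        · rw [cox_xx, if_neg (by simp only [Sum.inl.injEq, Fin.mk.injEq]; exact hik)]
    · rw [X_out k hk, mul_one, one_mul]
  · rw [X_out i hi, mul_one, one_mul]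

lemma comm_XY (i k : ℕ) (hk : 2 ≤ k) : X g n i * Y g n k = Y g n k * X g n i := by
  by_cases hi : i ≤ n
  · by_cases hky : k ≤ 2*g-1
    · rw [X_in i hi, Y_in k (by omega) hky]
      refine artin_comm (by simp) ?_
      rw [cox_xy', if_neg (show ¬ (k-1 = 0) by omega)]
    · rw [Y_out k (by omega), mul_one, one_mul]
  · rw [X_out i hi, mul_one, one_mul]

lemma braid_XY1 (hg : 2 ≤ g) (i : ℕ) (h : i ≤ n) :
    X g n i * Y g n 1 * X g n i = Y g n 1 * X g n i * Y g n 1 := by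
  rw [X_in i h, Y_in 1 le_rfl (by omega)]
  refine artin_braid (by simp) ?_
  rw [cox_xy', if_pos (show 1-1 = 0 by omega)]

lemma braid_YY (hg : 2 ≤ g) (k : ℕ) (h1 : 1 ≤ k) (h2 : k + 1 ≤ 2*g-1) :
    Y g n k * Y g n (k+1) * Y g n k = Y g n (k+1) * Y g n k * Y g n (k+1) := by
  rw [Y_in k h1 (by omega), Y_in (k+1) (by omega) h2]
  refine artin_braid ?_ ?_
  · simp only [ne_eq, Sum.inr.injEq, Sum.inl.injEq, Fin.mk.injEq]; omega
  · rw [cox_yy', if_neg (by simp only [Fin.mk.injEq]; omega),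
      if_pos (show k-1+1 = k+1-1 ∨ k+1-1+1 = k-1 from Or.inl (by omega))]

lemma comm_YY (k l : ℕ) (hkl : k + 2 ≤ l) : Y g n k * Y g n l = Y g n l * Y g n k := by
  by_cases hk : 1 ≤ k ∧ k ≤ 2*g-1
  · by_cases hl : 1 ≤ l ∧ l ≤ 2*g-1
    · rw [Y_in k hk.1 hk.2, Y_in l hl.1 hl.2]
      refine artin_comm ?_ ?_
      · simp only [ne_eq, Sum.inr.injEq, Sum.inl.injEq, Fin.mk.injEq]; omega
      · rw [cox_yy', if_neg (by simp only [Fin.mk.injEq]; omega),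
          if_neg (show ¬ (k-1+1 = l-1 ∨ l-1+1 = k-1) by omega)]
    · rw [Y_out l hl, mul_one, one_mul]
  · rw [Y_out k hk, mul_one, one_mul]

end Rels

section Machinery

variable {g n : ℕ}

private lemma pr4_comm (hg : 2 ≤ g) {i j : ℕ} (hji : j < i) (hin : i ≤ n - 1) :
    Y g n 2 * PresentedGroup.mk (artinRels g n ∪ prRels g n) (Wrel g n i j)
      = PresentedGroup.mk (artinRels g n ∪ prRels g n) (Wrel g n i j) * Y g n 2 := by
  have h1 := mk_rel_one (g := g) (n := n)
    (Set.mem_union_right _ (show _ ∈ prRels g n from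
      Or.inr (Or.inr (Or.inr (Or.inl ⟨hg, i, j, hji, hin, rfl⟩)))))
  have h2 : (Y g n 2 * PresentedGroup.mk (artinRels g n ∪ prRels g n) (Wrel g n i j)) *
      (PresentedGroup.mk (artinRels g n ∪ prRels g n) (Wrel g n i j) * Y g n 2)⁻¹ = 1 := h1
  exact mul_inv_eq_one.mp h2

private lemma mkW_eq (hn : 1 ≤ n) (j : ℕ) :
    PresentedGroup.mk (artinRels g n ∪ prRels g n) (Wrel g n (n-1) j)
      = (X g n j * Y g n 1 * X g n n * X g n j * Y g n 1 * X g n j)⁻¹ *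
        X g n (n-1) * (X g n j * Y g n 1 * X g n n * X g n j * Y g n 1 * X g n j) := by
  have hnn : n - 1 + 1 = n := by omega
  show PresentedGroup.mk (artinRels g n ∪ prRels g n)
      ((fx g n j * fy g n 1 * fx g n (n-1+1) * fx g n j * fy g n 1 * fx g n j)⁻¹ *
        fx g n (n-1) *
        (fx g n j * fy g n 1 * fx g n (n-1+1) * fx g n j * fy g n 1 * fx g n j)) = _
  rw [hnn]
  rfl

/-- the chain `c 0 = x_{n-1}`, `c k = y_k`. -/
def cc (g n : ℕ) (k : ℕ) : PG g n := if k = 0 then X g n (n-1) else Y g n k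

private lemma cc_zero : cc g n 0 = X g n (n-1) := if_pos rfl

private lemma cc_succ (k : ℕ) : cc g n (k+1) = Y g n (k+1) := if_neg (Nat.succ_ne_zero k)

/-- `P i = c_0 c_1 ⋯ c_i` -/
def PP (g n : ℕ) (i : ℕ) : PG g n := ((List.range (i+1)).map (cc g n)).prod

/-- `Δ_i = Δ(c_0, …, c_i)` -/
def DD (g n : ℕ) (i : ℕ) : PG g n := deltaList ((List.range (i+1)).map (cc g n))

/-- `T'_m` -/
def TT (g n : ℕ) (t : PG g n) : ℕ → PG g n
  | 0 => t
  | m+1 => (TT g n t m)⁻¹ * (cc g n (m+1))⁻¹ * cc g n m * cc g n (m+1) * TT g n t m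

private lemma PP_zero : PP g n 0 = cc g n 0 := by
  show ((List.range 1).map (cc g n)).prod = cc g n 0
  rw [show List.range 1 = [0] from rfl, List.map_singleton, List.prod_singleton]

private lemma PP_succ (i : ℕ) : PP g n (i+1) = PP g n i * cc g n (i+1) := by
  show ((List.range (i+1+1)).map (cc g n)).prod = _
  rw [List.range_succ, List.map_append, List.map_singleton, List.prod_append,
    List.prod_singleton]
  rfl

private lemma deltaList_singleton {G : Type*} [Group G] (z : G) : deltaList [z] = z := by
  simp [deltaList]

private lemma deltaList_concat {G : Type*} [Group G] (l : List G) (z : G) :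
    deltaList (l ++ [z]) = (l.prod * z) * deltaList l := by
  unfold deltaList
  have hlen : (l ++ [z]).length = l.length + 1 := by simp
  rw [hlen, List.range_succ, List.reverse_append, List.reverse_singleton]
  rw [show ([l.length] ++ (List.range l.length).reverse) = l.length :: (List.range l.length).reverse from rfl]
  rw [List.map_cons, List.prod_cons]
  congr 1
  · rw [show (l ++ [z]).take (l.length + 1) = l ++ [z] from by
      simp]
    simp
  · congr 1
    refine List.map_congr_left ?_
    intro k hk
    have hk' : k < l.length := by
      have := List.mem_reverse.mp hk
      exact List.mem_range.mp this
    rw [List.take_append_of_le_length (by omega)]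

private lemma DD_zero : DD g n 0 = cc g n 0 := by
  show deltaList ((List.range 1).map (cc g n)) = cc g n 0
  rw [show List.range 1 = [0] from rfl, List.map_cons, List.map_nil, deltaList_singleton]

private lemma DD_succ (i : ℕ) : DD g n (i+1) = PP g n (i+1) * DD g n i := by
  show deltaList ((List.range (i+1+1)).map (cc g n)) = _
  rw [List.range_succ, List.map_append, List.map_singleton, deltaList_concat, PP_succ]
  rfl

private lemma list_eq (i : ℕ) :
    (List.range (i+1)).map (cc g n)
      = X g n (n-1) :: (List.range i).map (fun k => Y g n (k+1)) := by
  rw [List.range_succ_eq_map, List.map_cons, List.map_map, cc_zero]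
  rfl

private lemma B_eq (i : ℕ) :
    B g n i = (DD g n i)⁻¹ * (X g n (n-1))⁻¹ * X g n n * DD g n i := by
  unfold B DD
  rw [list_eq]

-- relations among the chain elements
private lemma braid_cc (hg : 2 ≤ g) (hn : 1 ≤ n) (k : ℕ) (hk : k + 1 ≤ 2*g-1) :
    cc g n k * cc g n (k+1) * cc g n k = cc g n (k+1) * cc g n k * cc g n (k+1) := by
  cases k with
  | zero => rw [cc_zero, cc_succ]; exact braid_XY1 hg (n-1) (by omega)
  | succ k' => rw [cc_succ, cc_succ]; exact braid_YY hg (k'+1) (by omega) hk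

private lemma comm_cc (k l : ℕ) (hkl : k + 2 ≤ l) :
    Commute (cc g n k) (cc g n l) := by
  obtain ⟨l', rfl⟩ : ∃ l', l = l'+1 := ⟨l-1, by omega⟩
  rw [cc_succ]
  cases k with
  | zero => rw [cc_zero]; exact comm_XY (n-1) (l'+1) (by omega)
  | succ k' => rw [cc_succ]; exact comm_YY (k'+1) (l'+1) (by omega)

private lemma comm_t_cc (j k : ℕ) (hk : k ≠ 1) : Commute (X g n j) (cc g n k) := by
  cases k with
  | zero => rw [cc_zero]; exact comm_XX j (n-1)
  | succ k' => rw [cc_succ]; exact comm_XY j (k'+1) (by omega)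

private lemma comm_PP_cc (m k : ℕ) (h : m + 2 ≤ k) : Commute (PP g n m) (cc g n k) := by
  induction m with
  | zero => rw [PP_zero]; exact comm_cc 0 k (by omega)
  | succ m' ih =>
      rw [PP_succ]
      exact Commute.mul_left (ih (by omega)) (comm_cc (m'+1) k (by omega))

private lemma shift (hg : 2 ≤ g) (hn : 1 ≤ n) :
    ∀ i k, k < i → k + 1 ≤ 2*g-1 →
      SemiconjBy (PP g n i) (cc g n k) (cc g n (k+1)) := by
  intro i
  induction i with
  | zero => intro k hk; omega
  | succ i ih =>
      intro k hk hk2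
      rcases Nat.lt_succ_iff_lt_or_eq.mp hk with h | h
      · rw [PP_succ]
        exact SemiconjBy.mul_left (ih k h hk2) ((comm_cc k (i+1) (by omega)).symm)
      · subst h
        cases k with
        | zero =>
            show SemiconjBy (PP g n 1) (cc g n 0) (cc g n 1)
            rw [PP_succ, PP_zero]
            show (cc g n 0 * cc g n 1) * cc g n 0 = cc g n 1 * (cc g n 0 * cc g n 1)
            rw [← mul_assoc]
            exact braid_cc hg hn 0 hk2
        | succ k' =>
            have hPP : PP g n (k'+1+1) = PP g n k' * cc g n (k'+1) * cc g n (k'+2) := by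
              rw [PP_succ, PP_succ]
            show SemiconjBy (PP g n (k'+2)) (cc g n (k'+1)) (cc g n (k'+2))
            rw [hPP]
            show (PP g n k' * cc g n (k'+1) * cc g n (k'+2)) * cc g n (k'+1)
              = cc g n (k'+2) * (PP g n k' * cc g n (k'+1) * cc g n (k'+2))
            have hbr := braid_cc hg hn (k'+1) hk2
            have hcm := (comm_PP_cc (g:=g) (n:=n) k' (k'+2) (by omega)).eq
            calc (PP g n k' * cc g n (k'+1) * cc g n (k'+2)) * cc g n (k'+1)
                = PP g n k' * (cc g n (k'+1) * cc g n (k'+2) * cc g n (k'+1)) := by group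
            _ = PP g n k' * (cc g n (k'+2) * cc g n (k'+1) * cc g n (k'+2)) := by rw [hbr]
            _ = (PP g n k' * cc g n (k'+2)) * (cc g n (k'+1) * cc g n (k'+2)) := by group
            _ = (cc g n (k'+2) * PP g n k') * (cc g n (k'+1) * cc g n (k'+2)) := by rw [hcm]
            _ = cc g n (k'+2) * (PP g n k' * cc g n (k'+1) * cc g n (k'+2)) := by group

private lemma lemB (hg : 2 ≤ g) (hn : 1 ≤ n) (j : ℕ) (hj : j ≤ n) :
    ∀ i, 1 ≤ i → SemiconjBy (PP g n i) (X g n j)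
      ((X g n j)⁻¹ * (cc g n 1)⁻¹ * cc g n 0 * cc g n 1 * X g n j) := by
  intro i
  induction i with
  | zero => omega
  | succ i ih =>
      intro _
      rcases Nat.eq_zero_or_pos i with h0 | hpos
      · subst h0
        rw [PP_succ, PP_zero]
        have hb2 : cc g n 0 * cc g n 1 * X g n j * (cc g n 1)⁻¹ * (cc g n 0)⁻¹
            = (X g n j)⁻¹ * (cc g n 1)⁻¹ * cc g n 0 * cc g n 1 * X g n j := by
          refine LPgen.gen_b2 ?_ ?_ ?_
          · exact (comm_t_cc j 0 (by omega)).eq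
          · rw [cc_succ]; exact braid_XY1 hg j hj
          · rw [cc_zero, cc_succ]; exact braid_XY1 hg (n-1) (by omega)
        show (cc g n 0 * cc g n 1) * X g n j
          = ((X g n j)⁻¹ * (cc g n 1)⁻¹ * cc g n 0 * cc g n 1 * X g n j) * (cc g n 0 * cc g n 1)
        calc (cc g n 0 * cc g n 1) * X g n j
            = (cc g n 0 * cc g n 1 * X g n j * (cc g n 1)⁻¹ * (cc g n 0)⁻¹) *
              (cc g n 0 * cc g n 1) := by group
        _ = ((X g n j)⁻¹ * (cc g n 1)⁻¹ * cc g n 0 * cc g n 1 * X g n j) *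
              (cc g n 0 * cc g n 1) := by rw [hb2]
      · rw [PP_succ]
        exact SemiconjBy.mul_left (ih hpos) ((comm_t_cc j (i+1) (by omega)).symm)

private lemma lemC (hg : 2 ≤ g) (hn : 1 ≤ n) (j : ℕ) (hj : j ≤ n) :
    ∀ i m, m < i → i ≤ 2*g-1 →
      SemiconjBy (PP g n i) (TT g n (X g n j) m) (TT g n (X g n j) (m+1)) := by
  intro i m
  induction m with
  | zero =>
      intro hm hi
      show SemiconjBy (PP g n i) (X g n j)
        ((X g n j)⁻¹ * (cc g n 1)⁻¹ * cc g n 0 * cc g n 1 * X g n j)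
      exact lemB hg hn j hj i (by omega)
  | succ m ih =>
      intro hm hi
      have h1 := ih (by omega) hi
      have s0 := shift hg hn i m (by omega) (by omega)
      have s1 := shift hg hn i (m+1) (by omega) (by omega)
      exact (((h1.inv_right.mul_right s1.inv_right).mul_right s0).mul_right s1).mul_right h1

private lemma lemD (hg : 2 ≤ g) (hn : 1 ≤ n) (j : ℕ) (hj : j ≤ n) :
    ∀ i, i ≤ 2*g-1 → SemiconjBy (DD g n i) (X g n j) (TT g n (X g n j) i) := by
  intro i
  induction i with
  | zero =>
      intro _
      rw [DD_zero]
      exact (comm_t_cc j 0 (by omega)).symm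
  | succ i ih =>
      intro h
      rw [DD_succ]
      exact SemiconjBy.mul_left (lemC hg hn j hj (i+1) i (by omega) h) (ih (by omega))

private lemma lemRev (hg : 2 ≤ g) (hn : 1 ≤ n) :
    ∀ i, i ≤ 2*g-1 → SemiconjBy (DD g n i) (cc g n 0) (cc g n i) := by
  intro i
  induction i with
  | zero =>
      intro _
      rw [DD_zero]
      exact Commute.refl _
  | succ i ih =>
      intro h
      rw [DD_succ]
      exact SemiconjBy.mul_left (shift hg hn (i+1) i (by omega) (by omega)) (ih (by omega))

private lemma comm_u_cc (k : ℕ) (hk : 2 ≤ k) :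
    Commute ((X g n (n-1))⁻¹ * X g n n) (cc g n k) := by
  obtain ⟨k', rfl⟩ : ∃ k', k = k'+1 := ⟨k-1, by omega⟩
  rw [cc_succ]
  exact Commute.mul_left ((show Commute (X g n (n-1)) (Y g n (k'+1)) from
    comm_XY (n-1) (k'+1) (by omega)).inv_left)
    (show Commute (X g n n) (Y g n (k'+1)) from comm_XY n (k'+1) (by omega))

private lemma lemF (j : ℕ)
    (base : Commute ((X g n (n-1))⁻¹ * X g n n) (TT g n (X g n j) 2)) :
    ∀ i, 2 ≤ i → Commute ((X g n (n-1))⁻¹ * X g n n) (TT g n (X g n j) i) := by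
  intro i
  induction i with
  | zero => omega
  | succ i ih =>
      intro hi
      rcases Nat.lt_or_ge i 2 with h2 | h2
      · have : i + 1 = 2 := by omega
        rw [this]; exact base
      · have hci := comm_u_cc (g := g) (n := n) i h2
        have hci1 := comm_u_cc (g := g) (n := n) (i+1) (by omega)
        have ihh := ih h2
        show Commute ((X g n (n-1))⁻¹ * X g n n)
          ((TT g n (X g n j) i)⁻¹ * (cc g n (i+1))⁻¹ * cc g n i * cc g n (i+1) *
            TT g n (X g n j) i)
        exact (((ihh.inv_right.mul_right hci1.inv_right).mul_right hci).mul_right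
          hci1).mul_right ihh

private lemma DD2_eq (hg : 2 ≤ g) (hn : 1 ≤ n) :
    DD g n 2 = X g n (n-1) * Y g n 1 * Y g n 2 * (X g n (n-1) * Y g n 1) * X g n (n-1) := by
  rw [show (2:ℕ) = 1+1 from rfl, DD_succ, DD_succ, DD_zero, PP_succ, PP_succ, PP_zero,
    cc_zero, cc_succ, cc_succ]
  group

end Machinery


end LabruereParisP

open LabruereParisP in
/-- The verification of relation (PT7) in the proof of Proposition 3.3 of
Labruère–Paris: in `PG(g,0,n)` with `g ≥ 2`, `x_jB_ix_j⁻¹ = B_i` for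
`0 ≤ j ≤ n-1` and `2 ≤ i ≤ 2g-1`. -/
theorem relation_PT7 (g n : ℕ) (hg : 2 ≤ g) (hn : 1 ≤ n)
    (j i : ℕ) (hj : j ≤ n - 1) (hi1 : 2 ≤ i) (hi2 : i ≤ 2 * g - 1) :
    X g n j * B g n i * (X g n j)⁻¹ = B g n i := by
  have hj' : j ≤ n := by omega
  have key : ((X g n (n-1))⁻¹ * X g n n) * (DD g n i * X g n j * (DD g n i)⁻¹)
      = (DD g n i * X g n j * (DD g n i)⁻¹) * ((X g n (n-1))⁻¹ * X g n n) := by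
    by_cases hcase : j = n - 1
    · have hrev := LPgen.semiconj_to_conj (lemRev hg hn i hi2)
      have hXj : X g n j = cc g n 0 := by rw [hcase, cc_zero]
      rw [hXj, hrev]
      exact (comm_u_cc i hi1).eq
    · have hjn : j < n - 1 := by omega
      have hD := LPgen.semiconj_to_conj (lemD hg hn j hj' i hi2)
      rw [hD]
      refine (lemF j ?base i hi1).eq
      case base =>
        have h2 : TT g n (X g n j) 2 = DD g n 2 * X g n j * (DD g n 2)⁻¹ :=
          (LPgen.semiconj_to_conj (lemD hg hn j hj' 2 (by omega))).symm
        have hW : Y g n 2 *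
            ((X g n j * Y g n 1 * X g n n * X g n j * Y g n 1 * X g n j)⁻¹ *
              X g n (n-1) *
              (X g n j * Y g n 1 * X g n n * X g n j * Y g n 1 * X g n j))
            = ((X g n j * Y g n 1 * X g n n * X g n j * Y g n 1 * X g n j)⁻¹ *
              X g n (n-1) *
              (X g n j * Y g n 1 * X g n n * X g n j * Y g n 1 * X g n j)) * Y g n 2 := by
          have h := pr4_comm hg hjn (le_refl (n-1))
          rw [mkW_eq hn j] at h
          exact h
        rw [h2]
        exact LPgen.gen_E (comm_XX j (n-1)) (comm_XX j n) (comm_XX (n-1) n)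
          (comm_XY j 2 le_rfl) (comm_XY (n-1) 2 le_rfl) (comm_XY n 2 le_rfl)
          (braid_XY1 hg j hj') (braid_XY1 hg (n-1) (by omega)) (braid_XY1 hg n le_rfl)
          (braid_YY hg 1 le_rfl (by omega)) (DD2_eq hg hn) hW
  rw [B_eq]
  have hc := LPgen.conj_swap key
  calc X g n j * ((DD g n i)⁻¹ * (X g n (n-1))⁻¹ * X g n n * DD g n i) * (X g n j)⁻¹
      = (X g n j * ((DD g n i)⁻¹ * ((X g n (n-1))⁻¹ * X g n n) * DD g n i)) *
        (X g n j)⁻¹ := by group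
  _ = (((DD g n i)⁻¹ * ((X g n (n-1))⁻¹ * X g n n) * DD g n i) * X g n j) *
        (X g n j)⁻¹ := by rw [hc]
  _ = (DD g n i)⁻¹ * (X g n (n-1))⁻¹ * X g n n * DD g n i := by group
end
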